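/- LT_Z(R) decomposes as a direct sum of real vector spaces LT_Z(R) = P_−(R) ⊕ SH(R), where P_−(R) consists of lower-triangular matrices P = Σ_{j ≤ 0} d_j Λ^j with d_0 real-diagonal, and SH(R) consists of the skew-hermitian matrices; the projections are π_−(P) = a_0 + Σ_{j<0} d_j Λ^j + Σ_{j<0} Λ^j d_{−j}* and π_{sh}(P) = P − π_−(P), where d_j = a_j + i b_j splits each diagonal into real and imaginary parts. Moreover P_−(R) is a Lie subalgebra. -/
import Mathlib


/- The coefficient algebra is `R = ℂ ⊗_ℝ R(ℝ)`, realized as the algebra `T → ℂ`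
of complex-valued functions, with complex conjugation acting pointwise; the
real subalgebra `R(ℝ)` is the set of real-valued functions. -/

noncomputable def matMul {T : Type*} (A B : ℤ → ℤ → T → ℂ) : ℤ → ℤ → T → ℂ :=
  fun i j => ∑ᶠ k, A i k * B k j

def LTZ {T : Type*} (A : ℤ → ℤ → T → ℂ) : Prop :=
  ∃ N : ℤ, ∀ i j : ℤ, N < j - i → A i j = 0

/-- Skew-hermitian: `A* = -A`, where `*` is conjugate transpose (conjugation
pointwise on the function coefficients). -/
def SkewHermitianF {T : Type*} (A : ℤ → ℤ → T → ℂ) : Prop :=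
  ∀ i j : ℤ, star (A j i) = -A i j

/-- Member of `P_-(ℝ)`: lower triangular with real-valued main diagonal. -/
def LowerReal {T : Type*} (P : ℤ → ℤ → T → ℂ) : Prop :=
  (∀ i j : ℤ, i < j → P i j = 0) ∧ (∀ (i : ℤ) (t : T), (P i i t).im = 0)

/-- The projection `π_-` onto `P_-(ℝ)`:
`π_-(P) = a_0 + Σ_{j<0} d_j Λ^j + Σ_{j<0} Λ^j d_{-j}*`, written entrywise. -/
noncomputable def piMinus {T : Type*} (P : ℤ → ℤ → T → ℂ) : ℤ → ℤ → T → ℂ :=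
  fun i j => if i < j then 0
    else if i = j then (fun t => ((P i i t).re : ℂ))
    else P i j + star (P j i)

/-- `LT_ℤ(R) = P_-(ℝ) ⊕ SH(R)` as real vector spaces, with the stated
projections, and `P_-(ℝ)` is a Lie subalgebra. -/
theorem statement6 {T : Type*} :
    (∀ P : ℤ → ℤ → T → ℂ, LTZ P →
      (LowerReal (piMinus P) ∧ LTZ (piMinus P)) ∧
      (SkewHermitianF (P - piMinus P) ∧ LTZ (P - piMinus P)) ∧
      P = piMinus P + (P - piMinus P) ∧
      (∀ Q S : ℤ → ℤ → T → ℂ, LowerReal Q → LTZ Q → SkewHermitianF S → LTZ S →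
        P = Q + S → Q = piMinus P ∧ S = P - piMinus P)) ∧
    (∀ A B : ℤ → ℤ → T → ℂ, LowerReal A → LowerReal B →
        LowerReal (matMul A B - matMul B A)) := by
  constructor
  · intro P hP
    obtain ⟨N, hN⟩ := hP
    have key : ∀ Q S : ℤ → ℤ → T → ℂ, LowerReal Q → SkewHermitianF S →
        P = Q + S → Q = piMinus P := by
      intro Q S hQ hS hPQS
      funext i j t
      rcases lt_trichotomy i j with h | h | h
      · simp [piMinus, h, hQ.1 i j h]
      · subst h
        have hP' : P i i t = Q i i t + S i i t := by rw [hPQS]; simp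
        have hSim : star (S i i t) = -(S i i t) := by
          have := congrFun (hS i i) t
          simpa using this
        have hSre : (S i i t).re = 0 := by
          have := congrArg Complex.re hSim
          simp at this; linarith
        have hQim : (Q i i t).im = 0 := hQ.2 i t
        simp only [piMinus, lt_irrefl, if_false, if_pos rfl]
        apply Complex.ext
        · simp [hP', hSre]
        · simp [hQim]
      · have h1 : ¬ i < j := by omega
        have h2 : ¬ i = j := by omega
        have hPij : P i j t = Q i j t + S i j t := by rw [hPQS]; simp
        have hPji : P j i t = S j i t := by
          rw [hPQS]; simp [hQ.1 j i h]
        have hS' : star (S j i t) = -(S i j t) := by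
          have := congrFun (hS i j) t
          simpa using this
        simp only [piMinus, if_neg h1, if_neg h2]
        simp [hPij, hPji, hS']
    refine ⟨⟨⟨fun i j hij => by simp [piMinus, hij],
        fun i t => by simp [piMinus]⟩,
      ⟨0, fun i j h => by simp [piMinus, show i < j by omega]⟩⟩, ⟨?_, ?_⟩, by abel, ?_⟩
    · intro i j
      funext t
      rcases lt_trichotomy i j with h | h | h
      · have h1 : ¬ j < i := by omega
        have h2 : ¬ j = i := by omega
        simp [piMinus, h, h1, h2]
      · subst h
        simp only [Pi.sub_apply, Pi.star_apply, Pi.neg_apply, piMinus,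
          lt_irrefl, if_false, if_pos rfl]
        apply Complex.ext <;> simp
      · have h1 : ¬ i < j := by omega
        have h2 : ¬ i = j := by omega
        have h3 : ¬ j = i := by omega
        simp only [Pi.sub_apply, Pi.star_apply, Pi.neg_apply, piMinus,
          if_pos h, if_neg h1, if_neg h2]
        simp [star_add]
    · refine ⟨max N 0, fun i j h => ?_⟩
      have hij : i < j := by omega
      have : P i j = 0 := hN i j (by omega)
      simp [piMinus, hij, this]
    · intro Q S hQ _ hS _ hPQS
      have hQe := key Q S hQ hS hPQS
      refine ⟨hQe, ?_⟩
      rw [← hQe, hPQS]; abel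
  · intro A B hA hB
    have hdiag : ∀ C D : ℤ → ℤ → T → ℂ, LowerReal C → LowerReal D →
        ∀ i : ℤ, matMul C D i i = C i i * D i i := by
      intro C D hC hD i
      have : ∀ k : ℤ, k ≠ i → C i k * D k i = 0 := by
        intro k hk
        rcases lt_or_gt_of_ne hk with h | h
        · rw [hD.1 k i h, mul_zero]
        · rw [hC.1 i k h, zero_mul]
      exact finsum_eq_single _ i this
    constructor
    · intro i j hij
      have hz : ∀ C D : ℤ → ℤ → T → ℂ, LowerReal C → LowerReal D →
          matMul C D i j = 0 := by
        intro C D hC hD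
        have : ∀ k : ℤ, C i k * D k j = 0 := by
          intro k
          rcases le_or_gt k i with h | h
          · rw [hD.1 k j (by omega), mul_zero]
          · rw [hC.1 i k h, zero_mul]
        show (∑ᶠ k, C i k * D k j) = 0
        simp [this]
      simp [Pi.sub_apply, hz A B hA hB, hz B A hB hA]
    · intro i t
      have h1 := hdiag A B hA hB i
      have h2 := hdiag B A hB hA i
      show ((matMul A B - matMul B A) i i t).im = 0
      simp only [Pi.sub_apply, h1, h2, Pi.mul_apply]
      ring_nf
      simp
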